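/- For μ = (μ_1, μ_2) a composition of M+N, the Gauss decomposition blocks of the super Yangian satisfy (u-v)[D_{1;i,j}(u), E_{1;h,k}(v)] = (-1)^{|h|_1 |j|_1} δ_{hj} sum_{p=1}^{μ_1} D_{1;i,p}(u) ( E_{1;p,k}(v) - E_{1;p,k}(u) ) for all 1 ≤ i,j,h ≤ μ_1 and 1 ≤ k ≤ μ_2. -/

import Mathlib

noncomputable section

namespace SuperYangian

/-- The sign `(-1)^x` for `x : ZMod 2`. -/
def sgn (x : ZMod 2) : ℂ := if x = 0 then 1 else -1

variable {A : Type*}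

/-- The supercommutator `[x, y] = x*y - ε • (y*x)` with prescribed sign `ε`
(for homogeneous `x`, `y` one takes `ε = (-1)^{|x||y|}`). -/
def scomm [Ring A] [Algebra ℂ A] (ε : ℂ) (x y : A) : A := x * y - ε • (y * x)

/-- `off μ a = μ 0 + ⋯ + μ (a-1)`. -/
def off (μ : ℕ → ℕ) (a : ℕ) : ℕ := ∑ b ∈ Finset.range a, μ b

/-- A family `t i j r` (the coefficient of `u^{-r}` in `t_{ij}(u)`, with 0-based
indices `i j < d`) satisfying the defining RTT relations of the super Yangian
`Y(gl_{M|N})` with parity sequence `p`; the super Yangian itself, via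
`t_{i+1,j+1}^{(r)} = t i j r`, is the universal such family. -/
structure RTT (A : Type*) [Ring A] [Algebra ℂ A] (d : ℕ) (p : ℕ → ZMod 2) where
  t : ℕ → ℕ → ℕ → A
  t_zero : ∀ i j, t i j 0 = if i = j then (1 : A) else 0
  rtt : ∀ i j h k r s : ℕ, i < d → j < d → h < d → k < d →
    scomm (sgn ((p i + p j) * (p h + p k))) (t i j r) (t h k s) =
      sgn (p i * p j + p i * p h + p j * p h) •
        ∑ g ∈ Finset.range (min r s),
          (t h j g * t i k (r + s - 1 - g) - t h j (r + s - 1 - g) * t i k g)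

/-- Gauss decomposition data `T(u) = F(u) D(u) E(u)` with respect to the composition
`μ = (μ 0, …, μ (n-1))`, in coefficient form.  `E a b i j r` is the coefficient of
`u^{-r}` in the `(i,j)`-entry of the block `E_{a,b}(u)` (0-based blocks and entries),
extended by the identity on the diagonal blocks and by `0` below them; similarly `F`.
`D a` are the diagonal blocks and `D' a` their inverses.  Since the Gauss
decomposition is unique, this data consists exactly of the quasideterminant blocks. -/
structure Gauss [Ring A] [Algebra ℂ A] (T : ℕ → ℕ → ℕ → A) (n : ℕ) (μ : ℕ → ℕ) where
  D : ℕ → ℕ → ℕ → ℕ → A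
  D' : ℕ → ℕ → ℕ → ℕ → A
  E : ℕ → ℕ → ℕ → ℕ → ℕ → A
  F : ℕ → ℕ → ℕ → ℕ → ℕ → A
  E_diag : ∀ a i j r, E a a i j r = if i = j ∧ r = 0 then 1 else 0
  E_low : ∀ a b i j r, b < a → E a b i j r = 0
  E_zero : ∀ a b i j, a < b → E a b i j 0 = 0
  F_diag : ∀ a i j r, F a a i j r = if i = j ∧ r = 0 then 1 else 0
  F_high : ∀ a b i j r, a < b → F a b i j r = 0
  F_zero : ∀ a b i j, b < a → F a b i j 0 = 0
  D_zero : ∀ a i j, D a i j 0 = if i = j then (1 : A) else 0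
  D_inv : ∀ a i j r, a < n → i < μ a → j < μ a →
    ∑ q ∈ Finset.range (μ a), ∑ e ∈ Finset.range (r + 1), D a i q e * D' a q j (r - e) =
      if i = j ∧ r = 0 then 1 else 0
  D_inv' : ∀ a i j r, a < n → i < μ a → j < μ a →
    ∑ q ∈ Finset.range (μ a), ∑ e ∈ Finset.range (r + 1), D' a i q e * D a q j (r - e) =
      if i = j ∧ r = 0 then 1 else 0
  decomp : ∀ a b i j r, a < n → b < n → i < μ a → j < μ b →
    T (off μ a + i) (off μ b + j) r =
      ∑ c ∈ Finset.range n, ∑ q1 ∈ Finset.range (μ c), ∑ q2 ∈ Finset.range (μ c),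
        ∑ e1 ∈ Finset.range (r + 1), ∑ e2 ∈ Finset.range (r + 1 - e1),
          F a c i q1 e1 * D c q1 q2 e2 * E c b q2 j (r - e1 - e2)

section TwoVar
set_option linter.unusedSectionVars false

open PowerSeries Finset

variable {A : Type*} [Ring A] [Algebra ℂ A]

/-- Power series in two variables `X` (for `u⁻¹`) and `Y` (for `v⁻¹`), as iterated
power series: the outer variable is `Y`, the inner one is `X`. -/
abbrev Tw (A : Type*) [Ring A] : Type _ := PowerSeries (PowerSeries A)

/-- A series in the variable `X` only. -/
def inX (f : ℕ → A) : Tw A := PowerSeries.C (PowerSeries.mk f)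

/-- A series in the variable `Y` only. -/
def inY (f : ℕ → A) : Tw A := PowerSeries.mk fun s => PowerSeries.C (f s)

/-- The variable `X` of `Tw A`. -/
def XX : Tw A := PowerSeries.C PowerSeries.X

/-- The variable `Y` of `Tw A`. -/
def YY : Tw A := (PowerSeries.X : Tw A)

/-- The coefficient of `X^r Y^s`. -/
def cf (r s : ℕ) (φ : Tw A) : A := PowerSeries.coeff r (PowerSeries.coeff s φ)

lemma Tw.ext {φ ψ : Tw A} (h : ∀ r s, cf r s φ = cf r s ψ) : φ = ψ :=
  PowerSeries.ext fun s => PowerSeries.ext fun r => h r s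

lemma cf_add (r s : ℕ) (φ ψ : Tw A) : cf r s (φ + ψ) = cf r s φ + cf r s ψ := by
  simp [cf]

lemma cf_sub (r s : ℕ) (φ ψ : Tw A) : cf r s (φ - ψ) = cf r s φ - cf r s ψ := by
  simp [cf]

lemma cf_smul (r s : ℕ) (c : ℂ) (φ : Tw A) : cf r s (c • φ) = c • cf r s φ := by
  simp [cf]

lemma cf_zero (r s : ℕ) : cf r s (0 : Tw A) = 0 := by simp [cf]

lemma cf_sum {ι : Type*} (t : Finset ι) (f : ι → Tw A) (r s : ℕ) :
    cf r s (∑ x ∈ t, f x) = ∑ x ∈ t, cf r s (f x) := by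
  simp [cf]

lemma cf_one (r s : ℕ) : cf r s (1 : Tw A) = if r = 0 ∧ s = 0 then 1 else 0 := by
  rw [cf, PowerSeries.coeff_one, apply_ite (PowerSeries.coeff r), map_zero,
    PowerSeries.coeff_one]
  by_cases hr : r = 0 <;> by_cases hs : s = 0 <;> simp [hr, hs]

lemma cf_inX (f : ℕ → A) (r s : ℕ) : cf r s (inX f) = if s = 0 then f r else 0 := by
  rw [cf, inX, PowerSeries.coeff_C, apply_ite (PowerSeries.coeff r), map_zero,
    PowerSeries.coeff_mk]

lemma cf_inY (f : ℕ → A) (r s : ℕ) : cf r s (inY f) = if r = 0 then f s else 0 := by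
  rw [cf, inY, PowerSeries.coeff_mk, PowerSeries.coeff_C]

lemma cf_inX_mul_inY (f g : ℕ → A) (r s : ℕ) : cf r s (inX f * inY g) = f r * g s := by
  rw [cf, inX, PowerSeries.coeff_C_mul, inY, PowerSeries.coeff_mk,
    PowerSeries.coeff_mul_C, PowerSeries.coeff_mk]

lemma cf_inY_mul_inX (f g : ℕ → A) (r s : ℕ) : cf r s (inY f * inX g) = f s * g r := by
  rw [cf, inX, PowerSeries.coeff_mul_C, inY, PowerSeries.coeff_mk,
    PowerSeries.coeff_C_mul, PowerSeries.coeff_mk]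

lemma cf_inX_mul_inX (f g : ℕ → A) (r s : ℕ) :
    cf r s (inX f * inX g) = if s = 0 then ∑ e ∈ range (r + 1), f e * g (r - e) else 0 := by
  simp only [cf, inX]
  rw [← map_mul, PowerSeries.coeff_C, apply_ite (PowerSeries.coeff r), map_zero,
    PowerSeries.coeff_mul, Finset.Nat.sum_antidiagonal_eq_sum_range_succ_mk]
  simp [PowerSeries.coeff_mk]

lemma cf_inY_mul_inY (f g : ℕ → A) (r s : ℕ) :
    cf r s (inY f * inY g) = if r = 0 then ∑ e ∈ range (s + 1), f e * g (s - e) else 0 := by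
  have h : PowerSeries.coeff s (inY f * inY g) =
      PowerSeries.C (∑ e ∈ range (s + 1), f e * g (s - e)) := by
    rw [PowerSeries.coeff_mul, Finset.Nat.sum_antidiagonal_eq_sum_range_succ_mk, map_sum]
    exact Finset.sum_congr rfl fun e _ => by simp [inY, PowerSeries.coeff_mk, map_mul]
  rw [cf, h, PowerSeries.coeff_C]

lemma cf_YY_mul (r s : ℕ) (φ : Tw A) : cf r (s + 1) (YY * φ) = cf r s φ := by
  rw [cf, YY, PowerSeries.coeff_succ_X_mul, cf]

lemma cf_YY_mul_zero (r : ℕ) (φ : Tw A) : cf r 0 (YY * φ) = 0 := by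
  rw [cf, YY, PowerSeries.coeff_zero_eq_constantCoeff, map_mul]
  simp

lemma cf_XX_mul (r s : ℕ) (φ : Tw A) : cf (r + 1) s (XX * φ) = cf r s φ := by
  rw [cf, XX, PowerSeries.coeff_C_mul, PowerSeries.coeff_succ_X_mul, cf]

lemma cf_XX_mul_zero (s : ℕ) (φ : Tw A) : cf 0 s (XX * φ) = 0 := by
  rw [cf, XX, PowerSeries.coeff_C_mul, PowerSeries.coeff_zero_eq_constantCoeff, map_mul]
  simp

lemma commute_XX (φ : Tw A) : Commute XX φ := by
  apply PowerSeries.ext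
  intro s
  rw [XX, PowerSeries.coeff_C_mul, PowerSeries.coeff_mul_C, (PowerSeries.commute_X _).eq]

lemma commute_YY (φ : Tw A) : Commute YY φ := (PowerSeries.commute_X φ).symm

lemma commute_Z (φ : Tw A) : Commute (YY - XX) φ :=
  (commute_YY φ).sub_left (commute_XX φ)

end TwoVar

section Signs
set_option linter.unusedSectionVars false

lemma zmod2_cases : ∀ a : ZMod 2, a = 0 ∨ a = 1 := by decide

lemma sgn_zero : sgn 0 = 1 := if_pos rfl

lemma sgn_one : sgn 1 = -1 := if_neg (by decide)

lemma sgn_add (a b : ZMod 2) : sgn (a + b) = sgn a * sgn b := by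
  rcases zmod2_cases a with rfl | rfl <;> rcases zmod2_cases b with rfl | rfl <;>
    simp [sgn_zero, sgn_one, show (1 + 1 : ZMod 2) = 0 by decide]

lemma zmod2_add_self (a : ZMod 2) : a + a = 0 := by
  rcases zmod2_cases a with rfl | rfl <;> decide

variable {R : Type*} [Ring R] [Algebra ℂ R]

lemma sgn_smul_sgn (a : ZMod 2) (x : R) : sgn a • sgn a • x = x := by
  rw [smul_smul, ← sgn_add, zmod2_add_self, sgn_zero, one_smul]

lemma scomm_mul_right (ε₁ ε₂ : ℂ) (x b c : R) :
    scomm (ε₁ * ε₂) x (b * c) = scomm ε₁ x b * c + ε₁ • (b * scomm ε₂ x c) := by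
  simp only [scomm, sub_mul, mul_sub, smul_mul_assoc, mul_smul_comm, smul_smul, smul_sub,
    mul_assoc]
  abel

lemma scomm_sum_right {ι : Type*} (t : Finset ι) (ε : ℂ) (x : R) (f : ι → R) :
    scomm ε x (∑ y ∈ t, f y) = ∑ y ∈ t, scomm ε x (f y) := by
  simp only [scomm, Finset.mul_sum, Finset.sum_mul, Finset.smul_sum, Finset.sum_sub_distrib]

lemma scomm_zero_right (ε : ℂ) (x : R) : scomm ε x 0 = 0 := by simp [scomm]

lemma scomm_one_one (y : R) : scomm 1 1 y = 0 := by simp [scomm]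

lemma scomm_one_right (x : R) : scomm 1 x 1 = 0 := by simp [scomm]

lemma scomm_zero_left (ε : ℂ) (y : R) : scomm ε 0 y = 0 := by simp [scomm]

end Signs

section RTTlemmas
set_option linter.unusedSectionVars false

open PowerSeries Finset

variable {A : Type*} [Ring A] [Algebra ℂ A] {d : ℕ} {p : ℕ → ZMod 2}

/-- Difference form of the RTT relation (coefficient of `u^{-r-1} v^{-s-1}` in
`(u - v)[t_{ij}(u), t_{hk}(v)]`). -/
lemma rtt_diff (S : RTT A d p) {i j h k : ℕ} (hi : i < d) (hj : j < d) (hh : h < d)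
    (hk : k < d) (r s : ℕ) :
    scomm (sgn ((p i + p j) * (p h + p k))) (S.t i j (r + 1)) (S.t h k s) -
      scomm (sgn ((p i + p j) * (p h + p k))) (S.t i j r) (S.t h k (s + 1)) =
      sgn (p i * p j + p i * p h + p j * p h) •
        (S.t h j r * S.t i k s - S.t h j s * S.t i k r) := by
  rw [S.rtt i j h k (r + 1) s hi hj hh hk, S.rtt i j h k r (s + 1) hi hj hh hk, ← smul_sub]
  congr 1
  have e1 : ∀ g, r + 1 + s - 1 - g = r + s - g := fun g => by omega
  have e2 : ∀ g, r + (s + 1) - 1 - g = r + s - g := fun g => by omega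
  simp_rw [e1, e2]
  rcases lt_trichotomy r s with hlt | rfl | hgt
  · rw [show min (r + 1) s = r + 1 by omega, show min r (s + 1) = r by omega,
      Finset.sum_range_succ, show r + s - r = s by omega]
    abel
  · rw [show min (r + 1) r = r by omega, show min r (r + 1) = r by omega, sub_self, sub_self]
  · rw [show min (r + 1) s = s by omega, show min r (s + 1) = s + 1 by omega,
      Finset.sum_range_succ, show r + s - s = r by omega]
    abel

/-- Series form of the RTT relation:
`(u-v)[t_{ij}(u), t_{hk}(v)] = ± (t_{hj}(u)t_{ik}(v) - t_{hj}(v)t_{ik}(u))`. -/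
lemma rtt_series (S : RTT A d p) {i j h k : ℕ} (hi : i < d) (hj : j < d) (hh : h < d)
    (hk : k < d) :
    (YY - XX) * scomm (sgn ((p i + p j) * (p h + p k))) (inX (S.t i j)) (inY (S.t h k)) =
      sgn (p i * p j + p i * p h + p j * p h) •
        (XX * (YY * (inX (S.t h j) * inY (S.t i k) - inY (S.t h j) * inX (S.t i k)))) := by
  have cfW : ∀ r s : ℕ, cf r s (scomm (sgn ((p i + p j) * (p h + p k)))
      (inX (S.t i j)) (inY (S.t h k))) =
      scomm (sgn ((p i + p j) * (p h + p k))) (S.t i j r) (S.t h k s) := by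
    intro r s
    rw [scomm, cf_sub, cf_smul, cf_inX_mul_inY, cf_inY_mul_inX, scomm]
  apply Tw.ext
  intro r s
  rw [sub_mul, cf_sub, cf_smul]
  rcases r with _ | r <;> rcases s with _ | s
  · rw [cf_YY_mul_zero, cf_XX_mul_zero, cf_XX_mul_zero, sub_zero, smul_zero]
  · rw [cf_YY_mul, cf_XX_mul_zero, cf_XX_mul_zero, sub_zero, smul_zero, cfW, S.t_zero]
    by_cases hij : i = j
    · subst hij
      rw [if_pos rfl, show (p i + p i) * (p h + p k) = 0 by
        rw [zmod2_add_self, zero_mul], sgn_zero, scomm_one_one]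
    · rw [if_neg hij, scomm_zero_left]
  · rw [cf_YY_mul_zero, cf_XX_mul, cf_XX_mul, cf_YY_mul_zero, smul_zero, zero_sub, cfW, S.t_zero]
    by_cases hhk : h = k
    · subst hhk
      rw [if_pos rfl, show (p i + p j) * (p h + p h) = 0 by
        rw [zmod2_add_self, mul_zero], sgn_zero, scomm_one_right, neg_zero]
    · rw [if_neg hhk, scomm_zero_right, neg_zero]
  · rw [cf_YY_mul, cf_XX_mul, cf_XX_mul, cf_YY_mul, cfW, cfW,
      rtt_diff S hi hj hh hk r s]
    congr 1
    rw [cf_sub, cf_inX_mul_inY, cf_inY_mul_inX]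

end RTTlemmas

section GaussLemmas
set_option linter.unusedSectionVars false

open PowerSeries Finset

variable {A : Type*} [Ring A] [Algebra ℂ A] {d : ℕ} {p : ℕ → ZMod 2} {μ : ℕ → ℕ}

lemma off_zero (μ : ℕ → ℕ) : off μ 0 = 0 := by simp [off]

lemma off_one (μ : ℕ → ℕ) : off μ 1 = μ 0 := by simp [off]

lemma off_two (μ : ℕ → ℕ) : off μ 2 = μ 0 + μ 1 := by
  simp [off, Finset.sum_range_succ]

/-- Inside the first diagonal block, `t_{ij}(u) = D_{1;ij}(u)`. -/
lemma t_eq_D (S : RTT A d p) (G : Gauss S.t 2 μ) {i j : ℕ} (hi : i < μ 0) (hj : j < μ 0)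
    (r : ℕ) : S.t i j r = G.D 0 i j r := by
  have h := G.decomp 0 0 i j r (by norm_num) (by norm_num) hi hj
  rw [off_zero, zero_add, zero_add] at h
  rw [h, Finset.sum_range_succ, Finset.sum_range_one]
  have hc1 : (∑ q1 ∈ range (μ 1), ∑ q2 ∈ range (μ 1), ∑ e1 ∈ range (r + 1),
      ∑ e2 ∈ range (r + 1 - e1),
        G.F 0 1 i q1 e1 * G.D 1 q1 q2 e2 * G.E 1 0 q2 j (r - e1 - e2)) = 0 := by
    apply Finset.sum_eq_zero; intro q1 _
    apply Finset.sum_eq_zero; intro q2 _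
    apply Finset.sum_eq_zero; intro e1 _
    apply Finset.sum_eq_zero; intro e2 _
    rw [G.F_high 0 1 i q1 e1 (by norm_num), zero_mul, zero_mul]
  rw [hc1, add_zero]
  rw [Finset.sum_eq_single_of_mem i (Finset.mem_range.2 hi) (by
    intro b _ hb
    apply Finset.sum_eq_zero; intro q2 _
    apply Finset.sum_eq_zero; intro e1 _
    apply Finset.sum_eq_zero; intro e2 _
    rw [G.F_diag, if_neg (fun hc => hb hc.1.symm), zero_mul, zero_mul])]
  rw [Finset.sum_eq_single_of_mem j (Finset.mem_range.2 hj) (by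
    intro b _ hb
    apply Finset.sum_eq_zero; intro e1 _
    apply Finset.sum_eq_zero; intro e2 _
    rw [G.E_diag, if_neg (fun hc => hb hc.1), mul_zero])]
  rw [Finset.sum_eq_single_of_mem 0 (Finset.mem_range.2 (by omega)) (by
    intro e1 _ he1
    apply Finset.sum_eq_zero; intro e2 _
    rw [G.F_diag, if_neg (fun hc => he1 hc.2), zero_mul, zero_mul])]
  rw [Finset.sum_eq_single_of_mem r (Finset.mem_range.2 (by omega)) (by
    intro e2 he2 he2'
    rw [Finset.mem_range] at he2
    rw [G.E_diag, if_neg (fun hc => he2' (by omega)), mul_zero])]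
  rw [G.F_diag, G.E_diag, if_pos ⟨rfl, rfl⟩, if_pos ⟨rfl, by omega⟩, one_mul, mul_one]

/-- In the upper-right block, `t_{i,μ₀+k}(u) = Σ_q D_{1;iq}(u) E_{1;qk}(u)`. -/
lemma t_eq_DE (S : RTT A d p) (G : Gauss S.t 2 μ) {i k : ℕ} (hi : i < μ 0) (hk : k < μ 1)
    (r : ℕ) : S.t i (μ 0 + k) r =
      ∑ q ∈ range (μ 0), ∑ e ∈ range (r + 1), G.D 0 i q e * G.E 0 1 q k (r - e) := by
  have h := G.decomp 0 1 i k r (by norm_num) (by norm_num) hi hk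
  rw [off_zero, off_one, zero_add] at h
  rw [h, Finset.sum_range_succ, Finset.sum_range_one]
  have hc1 : (∑ q1 ∈ range (μ 1), ∑ q2 ∈ range (μ 1), ∑ e1 ∈ range (r + 1),
      ∑ e2 ∈ range (r + 1 - e1),
        G.F 0 1 i q1 e1 * G.D 1 q1 q2 e2 * G.E 1 1 q2 k (r - e1 - e2)) = 0 := by
    apply Finset.sum_eq_zero; intro q1 _
    apply Finset.sum_eq_zero; intro q2 _
    apply Finset.sum_eq_zero; intro e1 _
    apply Finset.sum_eq_zero; intro e2 _
    rw [G.F_high 0 1 i q1 e1 (by norm_num), zero_mul, zero_mul]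
  rw [hc1, add_zero]
  rw [Finset.sum_eq_single_of_mem i (Finset.mem_range.2 hi) (by
    intro b _ hb
    apply Finset.sum_eq_zero; intro q2 _
    apply Finset.sum_eq_zero; intro e1 _
    apply Finset.sum_eq_zero; intro e2 _
    rw [G.F_diag, if_neg (fun hc => hb hc.1.symm), zero_mul, zero_mul])]
  rw [Finset.sum_comm]
  rw [Finset.sum_eq_single_of_mem 0 (Finset.mem_range.2 (by omega)) (by
    intro e1 _ he1
    apply Finset.sum_eq_zero; intro q2 _
    apply Finset.sum_eq_zero; intro e2 _
    rw [G.F_diag, if_neg (fun hc => he1 hc.2), zero_mul, zero_mul])]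
  apply Finset.sum_congr rfl
  intro q _
  rw [show r + 1 - 0 = r + 1 by omega]
  apply Finset.sum_congr rfl
  intro e _
  rw [G.F_diag, if_pos ⟨rfl, rfl⟩, one_mul, show r - 0 - e = r - e by omega]

/-- `inX` is compatible with pointwise equality. -/
lemma inX_congr {f g : ℕ → A} (h : ∀ r, f r = g r) : inX f = inX g :=
  Tw.ext fun r s => by rw [cf_inX, cf_inX, h r]

lemma inY_congr {f g : ℕ → A} (h : ∀ r, f r = g r) : inY f = inY g :=
  Tw.ext fun r s => by rw [cf_inY, cf_inY, h s]

/-- Series form of `t_eq_DE` in the variable `u`. -/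
lemma tu_eq_DE (S : RTT A d p) (G : Gauss S.t 2 μ) {i k : ℕ} (hi : i < μ 0) (hk : k < μ 1) :
    inX (S.t i (μ 0 + k)) =
      ∑ q ∈ range (μ 0), inX (G.D 0 i q) * inX (G.E 0 1 q k) := by
  apply Tw.ext
  intro r s
  rw [cf_inX, cf_sum]
  simp_rw [cf_inX_mul_inX, Finset.sum_ite_irrel, Finset.sum_const_zero]
  by_cases hs : s = 0
  · rw [if_pos hs, if_pos hs, t_eq_DE S G hi hk]
  · rw [if_neg hs, if_neg hs]

/-- Series form of `t_eq_DE` in the variable `v`. -/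
lemma tv_eq_DE (S : RTT A d p) (G : Gauss S.t 2 μ) {i k : ℕ} (hi : i < μ 0) (hk : k < μ 1) :
    inY (S.t i (μ 0 + k)) =
      ∑ q ∈ range (μ 0), inY (G.D 0 i q) * inY (G.E 0 1 q k) := by
  apply Tw.ext
  intro r s
  rw [cf_inY, cf_sum]
  simp_rw [cf_inY_mul_inY, Finset.sum_ite_irrel, Finset.sum_const_zero]
  by_cases hr : r = 0
  · rw [if_pos hr, if_pos hr, t_eq_DE S G hi hk]
  · rw [if_neg hr, if_neg hr]

/-- Series form of the inverse relation `D'(v) D(v) = 1`. -/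
lemma DvInv (S : RTT A d p) (G : Gauss S.t 2 μ) {m q : ℕ} (hm : m < μ 0) (hq : q < μ 0) :
    (∑ h' ∈ range (μ 0), inY (G.D' 0 m h') * inY (G.D 0 h' q)) =
      if m = q then (1 : Tw A) else 0 := by
  apply Tw.ext
  intro r s
  rw [cf_sum]
  simp_rw [cf_inY_mul_inY, Finset.sum_ite_irrel, Finset.sum_const_zero]
  have hrhs : cf r s (if m = q then (1 : Tw A) else 0) =
      if m = q ∧ s = 0 then (if r = 0 then (1 : A) else 0) else 0 := by
    rw [apply_ite (cf r s), cf_one, cf_zero]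
    by_cases hmq : m = q <;> by_cases hs : s = 0 <;> by_cases hr : r = 0 <;>
      simp [hmq, hs, hr]
  rw [hrhs]
  by_cases hr : r = 0
  · rw [if_pos hr, G.D_inv' 0 m q s (by norm_num) hm hq]
    by_cases hc : m = q ∧ s = 0 <;> simp [hc, hr]
  · rw [if_neg hr]
    by_cases hc : m = q ∧ s = 0 <;> simp [hc, hr]

end GaussLemmas

section StepC
set_option linter.unusedSectionVars false

open PowerSeries Finset

variable {A : Type*} [Ring A] [Algebra ℂ A] {d : ℕ} {p : ℕ → ZMod 2} {μ : ℕ → ℕ}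

lemma zmod2_split : ∀ a b c e : ZMod 2, a * (b + e) = a * (b + c) + a * (c + e) := by decide

/-- Summed commutation relation: `Σ_q ± D_{hq}(v) ((u-v)[D_{ij}(u), E_{qk}(v)])
  = ± D_{hj}(v) Σ_q D_{iq}(u)(E_{qk}(v) - E_{qk}(u))` (up to arrangement). -/
lemma stepC (S : RTT A d p) (G : Gauss S.t 2 μ) (hd : off μ 2 = d)
    {i j h k : ℕ} (hi : i < μ 0) (hj : j < μ 0) (hh : h < μ 0) (hk : k < μ 1) :
    ∑ q ∈ range (μ 0), sgn ((p i + p j) * (p h + p q)) •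
        (inY (G.D 0 h q) *
          ((YY - XX) * scomm (sgn ((p i + p j) * (p q + p (μ 0 + k))))
            (inX (G.D 0 i j)) (inY (G.E 0 1 q k)))) =
      sgn (p i * p j + p i * p h + p j * p h) •
        (XX * (YY * (inY (G.D 0 h j) *
          (∑ q ∈ range (μ 0), inX (G.D 0 i q) * inY (G.E 0 1 q k) -
           ∑ q ∈ range (μ 0), inX (G.D 0 i q) * inX (G.E 0 1 q k))))) := by
  have hd' : d = μ 0 + μ 1 := by rw [← hd, off_two]
  have hi' : i < d := by omega
  have hj' : j < d := by omega
  have hh' : h < d := by omega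
  have hk' : μ 0 + k < d := by omega
  have hXij : inX (S.t i j) = inX (G.D 0 i j) := inX_congr (t_eq_D S G hi hj)
  have hXhj : inX (S.t h j) = inX (G.D 0 h j) := inX_congr (t_eq_D S G hh hj)
  have hYhj : inY (S.t h j) = inY (G.D 0 h j) := inY_congr (t_eq_D S G hh hj)
  have hvh : inY (S.t h (μ 0 + k)) =
      ∑ q ∈ range (μ 0), inY (G.D 0 h q) * inY (G.E 0 1 q k) := tv_eq_DE S G hh hk
  have hvi : inY (S.t i (μ 0 + k)) =
      ∑ q ∈ range (μ 0), inY (G.D 0 i q) * inY (G.E 0 1 q k) := tv_eq_DE S G hi hk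
  have hui : inX (S.t i (μ 0 + k)) =
      ∑ q ∈ range (μ 0), inX (G.D 0 i q) * inX (G.E 0 1 q k) := tu_eq_DE S G hi hk
  have main := rtt_series S hi' hj' hh' hk'
  rw [hXij, hXhj, hYhj, hvh, hvi, hui] at main
  -- expand the left-hand side of `main`
  have lhs_eq : (YY - XX) * scomm (sgn ((p i + p j) * (p h + p (μ 0 + k))))
      (inX (G.D 0 i j)) (∑ q ∈ range (μ 0), inY (G.D 0 h q) * inY (G.E 0 1 q k)) =
      (∑ q ∈ range (μ 0),
        ((YY - XX) * scomm (sgn ((p i + p j) * (p h + p q)))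
          (inX (G.D 0 i j)) (inY (G.D 0 h q))) * inY (G.E 0 1 q k)) +
      ∑ q ∈ range (μ 0), sgn ((p i + p j) * (p h + p q)) •
        (inY (G.D 0 h q) *
          ((YY - XX) * scomm (sgn ((p i + p j) * (p q + p (μ 0 + k))))
            (inX (G.D 0 i j)) (inY (G.E 0 1 q k)))) := by
    rw [scomm_sum_right, Finset.mul_sum, ← Finset.sum_add_distrib]
    apply Finset.sum_congr rfl
    intro q _
    have hsgn : sgn ((p i + p j) * (p h + p (μ 0 + k))) =
        sgn ((p i + p j) * (p h + p q)) * sgn ((p i + p j) * (p q + p (μ 0 + k))) := by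
      rw [← sgn_add, zmod2_split (p i + p j) (p h) (p q) (p (μ 0 + k))]
    rw [hsgn, scomm_mul_right, mul_add, ← mul_assoc]
    congr 1
    rw [mul_smul_comm, ← mul_assoc, (commute_Z (inY (G.D 0 h q))).eq, mul_assoc]
  rw [lhs_eq] at main
  -- rewrite the first sum using the in-block relation
  have hS1 : ∀ q ∈ range (μ 0),
      ((YY - XX) * scomm (sgn ((p i + p j) * (p h + p q)))
        (inX (G.D 0 i j)) (inY (G.D 0 h q))) * inY (G.E 0 1 q k) =
      sgn (p i * p j + p i * p h + p j * p h) •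
        (XX * (YY * (inX (G.D 0 h j) * (inY (G.D 0 i q) * inY (G.E 0 1 q k)) -
          inY (G.D 0 h j) * (inX (G.D 0 i q) * inY (G.E 0 1 q k))))) := by
    intro q hq
    rw [Finset.mem_range] at hq
    have hq' : q < d := by omega
    have base := rtt_series S hi' hj' hh' hq'
    rw [hXij, hXhj, hYhj, inY_congr (t_eq_D S G hh hq), inY_congr (t_eq_D S G hi hq),
      inX_congr (t_eq_D S G hi hq)] at base
    rw [base, smul_mul_assoc]
    congr 1
    simp only [mul_sub, sub_mul, mul_assoc]
  rw [Finset.sum_congr rfl hS1] at main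
  have goal' := eq_sub_of_add_eq' main
  rw [goal']
  simp only [mul_sub, sub_mul, mul_assoc, smul_sub, Finset.mul_sum, Finset.smul_sum,
    Finset.sum_sub_distrib]
  abel

end StepC

section StepXi
set_option linter.unusedSectionVars false

open PowerSeries Finset

variable {A : Type*} [Ring A] [Algebra ℂ A] {d : ℕ} {p : ℕ → ZMod 2} {μ : ℕ → ℕ}

lemma zmod2_cancel : ∀ a b c : ZMod 2, a * b + a * (b + c) = a * c := by decide

lemma zmod2_sigma : ∀ a b c : ZMod 2, (a + b) * c + (a * b + a * c + b * c) = a * b := by decide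

lemma zmod2_final : ∀ a b : ZMod 2, (a + b) * b + a * b = b * b := by decide

/-- Series form of Statement 6:
`(u-v)[D_{ij}(u), E_{mk}(v)] = ± δ_{mj} Σ_q D_{iq}(u)(E_{qk}(v) - E_{qk}(u))`. -/
lemma stepXi (S : RTT A d p) (G : Gauss S.t 2 μ) (hd : off μ 2 = d)
    {i j m k : ℕ} (hi : i < μ 0) (hj : j < μ 0) (hm : m < μ 0) (hk : k < μ 1) :
    (YY - XX) * scomm (sgn ((p i + p j) * (p m + p (μ 0 + k))))
        (inX (G.D 0 i j)) (inY (G.E 0 1 m k)) =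
      sgn (p m * p j) •
        (if m = j then XX * (YY *
          (∑ q ∈ range (μ 0), inX (G.D 0 i q) * inY (G.E 0 1 q k) -
           ∑ q ∈ range (μ 0), inX (G.D 0 i q) * inX (G.E 0 1 q k))) else 0) := by
  have left : (∑ h' ∈ range (μ 0), sgn ((p i + p j) * p h') •
      (inY (G.D' 0 m h') * (∑ q ∈ range (μ 0), sgn ((p i + p j) * (p h' + p q)) •
        (inY (G.D 0 h' q) *
          ((YY - XX) * scomm (sgn ((p i + p j) * (p q + p (μ 0 + k))))
            (inX (G.D 0 i j)) (inY (G.E 0 1 q k))))))) =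
      sgn ((p i + p j) * p m) •
        ((YY - XX) * scomm (sgn ((p i + p j) * (p m + p (μ 0 + k))))
          (inX (G.D 0 i j)) (inY (G.E 0 1 m k))) := by
    calc
      _ = ∑ h' ∈ range (μ 0), ∑ q ∈ range (μ 0), sgn ((p i + p j) * p q) •
            (inY (G.D' 0 m h') * (inY (G.D 0 h' q) *
              ((YY - XX) * scomm (sgn ((p i + p j) * (p q + p (μ 0 + k))))
                (inX (G.D 0 i j)) (inY (G.E 0 1 q k))))) := by
        simp only [Finset.mul_sum, Finset.smul_sum, mul_smul_comm, smul_smul, ← sgn_add,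
          zmod2_cancel]
      _ = ∑ q ∈ range (μ 0), sgn ((p i + p j) * p q) •
            ((∑ h' ∈ range (μ 0), inY (G.D' 0 m h') * inY (G.D 0 h' q)) *
              ((YY - XX) * scomm (sgn ((p i + p j) * (p q + p (μ 0 + k))))
                (inX (G.D 0 i j)) (inY (G.E 0 1 q k)))) := by
        rw [Finset.sum_comm]
        apply Finset.sum_congr rfl; intro q _
        rw [Finset.sum_mul, Finset.smul_sum]
        apply Finset.sum_congr rfl; intro h' _
        rw [mul_assoc]
      _ = ∑ q ∈ range (μ 0), sgn ((p i + p j) * p q) •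
            ((if m = q then (1 : Tw A) else 0) *
              ((YY - XX) * scomm (sgn ((p i + p j) * (p q + p (μ 0 + k))))
                (inX (G.D 0 i j)) (inY (G.E 0 1 q k)))) := by
        apply Finset.sum_congr rfl; intro q hq
        rw [DvInv S G hm (Finset.mem_range.1 hq)]
      _ = ∑ q ∈ range (μ 0), (if m = q then sgn ((p i + p j) * p q) •
            ((YY - XX) * scomm (sgn ((p i + p j) * (p q + p (μ 0 + k))))
              (inX (G.D 0 i j)) (inY (G.E 0 1 q k))) else 0) := by
        apply Finset.sum_congr rfl; intro q _
        by_cases hmq : m = q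
        · rw [if_pos hmq, if_pos hmq, one_mul]
        · rw [if_neg hmq, if_neg hmq, zero_mul, smul_zero]
      _ = _ := by
        rw [Finset.sum_ite_eq, if_pos (Finset.mem_range.2 hm)]
  have right : (∑ h' ∈ range (μ 0), sgn ((p i + p j) * p h') •
      (inY (G.D' 0 m h') * (∑ q ∈ range (μ 0), sgn ((p i + p j) * (p h' + p q)) •
        (inY (G.D 0 h' q) *
          ((YY - XX) * scomm (sgn ((p i + p j) * (p q + p (μ 0 + k))))
            (inX (G.D 0 i j)) (inY (G.E 0 1 q k))))))) =
      sgn (p i * p j) • (if m = j then XX * (YY *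
          (∑ q ∈ range (μ 0), inX (G.D 0 i q) * inY (G.E 0 1 q k) -
           ∑ q ∈ range (μ 0), inX (G.D 0 i q) * inX (G.E 0 1 q k))) else 0) := by
    calc
      _ = ∑ h' ∈ range (μ 0), sgn (p i * p j) • (XX * (YY *
            ((inY (G.D' 0 m h') * inY (G.D 0 h' j)) *
              (∑ q ∈ range (μ 0), inX (G.D 0 i q) * inY (G.E 0 1 q k) -
               ∑ q ∈ range (μ 0), inX (G.D 0 i q) * inX (G.E 0 1 q k))))) := by
        apply Finset.sum_congr rfl; intro h' hh'
        rw [stepC S G hd hi hj (Finset.mem_range.1 hh') hk]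
        rw [mul_smul_comm, smul_smul, ← sgn_add, zmod2_sigma]
        congr 1
        rw [← mul_assoc, ← (commute_XX (inY (G.D' 0 m h'))).eq, mul_assoc]
        congr 1
        rw [← mul_assoc, ← (commute_YY (inY (G.D' 0 m h'))).eq, mul_assoc]
        congr 1
        rw [← mul_assoc]
      _ = sgn (p i * p j) • (XX * (YY *
            ((∑ h' ∈ range (μ 0), inY (G.D' 0 m h') * inY (G.D 0 h' j)) *
              (∑ q ∈ range (μ 0), inX (G.D 0 i q) * inY (G.E 0 1 q k) -
               ∑ q ∈ range (μ 0), inX (G.D 0 i q) * inX (G.E 0 1 q k))))) := by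
        simp only [Finset.sum_mul, Finset.mul_sum, Finset.smul_sum]
      _ = _ := by
        rw [DvInv S G hm hj]
        by_cases hmj : m = j
        · rw [if_pos hmj, if_pos hmj, one_mul]
        · rw [if_neg hmj, if_neg hmj, zero_mul, mul_zero, mul_zero]
  have key := left.symm.trans right
  rw [← sgn_smul_sgn ((p i + p j) * p m)
    ((YY - XX) * scomm (sgn ((p i + p j) * (p m + p (μ 0 + k))))
      (inX (G.D 0 i j)) (inY (G.E 0 1 m k))), key, smul_smul, ← sgn_add]
  by_cases hmj : m = j
  · have hsg : (p i + p j) * p m + p i * p j = p m * p j := by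
      rw [hmj]; exact zmod2_final (p i) (p j)
    rw [hsg]
  · simp only [if_neg hmj, smul_zero]

end StepXi

/-- For `μ = (μ 0, μ 1)` a composition of `M + N`, the Gauss blocks
satisfy `(u-v)[D_{1;i,j}(u), E_{1;h,k}(v)] = (-1)^{|h|₁|j|₁} δ_{hj}
Σ_p D_{1;i,p}(u)(E_{1;p,k}(v) - E_{1;p,k}(u))`, stated as the equality of the
coefficients of `u^{-r} v^{-s}` for all `r, s ≥ 0`. -/
theorem statement6 [Ring A] [Algebra ℂ A] {d : ℕ} {p : ℕ → ZMod 2} {μ : ℕ → ℕ}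
    (S : RTT A d p) (G : Gauss S.t 2 μ) (hd : off μ 2 = d) :
    ∀ i j h k r s : ℕ, i < μ 0 → j < μ 0 → h < μ 0 → k < μ 1 →
      scomm (sgn ((p i + p j) * (p h + p (μ 0 + k))))
          (G.D 0 i j (r + 1)) (G.E 0 1 h k s) -
        scomm (sgn ((p i + p j) * (p h + p (μ 0 + k))))
          (G.D 0 i j r) (G.E 0 1 h k (s + 1)) =
      sgn (p h * p j) •
        (if h = j then
          (∑ q ∈ Finset.range (μ 0), G.D 0 i q r * G.E 0 1 q k s) -
            (if s = 0 then
              ∑ q ∈ Finset.range (μ 0), ∑ e ∈ Finset.range (r + 1),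
                G.D 0 i q e * G.E 0 1 q k (r - e)
             else 0)
         else 0) := by
  intro i j h k r s hi hj hh hk
  have hfin := stepXi S G hd hi hj hh hk
  have cfW : ∀ r' s' : ℕ, cf r' s' (scomm (sgn ((p i + p j) * (p h + p (μ 0 + k))))
      (inX (G.D 0 i j)) (inY (G.E 0 1 h k))) =
      scomm (sgn ((p i + p j) * (p h + p (μ 0 + k)))) (G.D 0 i j r') (G.E 0 1 h k s') := by
    intro r' s'
    rw [scomm, cf_sub, cf_smul, cf_inX_mul_inY, cf_inY_mul_inX, scomm]
  have lhs_eq : cf (r + 1) (s + 1) ((YY - XX) *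
      scomm (sgn ((p i + p j) * (p h + p (μ 0 + k))))
        (inX (G.D 0 i j)) (inY (G.E 0 1 h k))) =
      scomm (sgn ((p i + p j) * (p h + p (μ 0 + k))))
          (G.D 0 i j (r + 1)) (G.E 0 1 h k s) -
        scomm (sgn ((p i + p j) * (p h + p (μ 0 + k))))
          (G.D 0 i j r) (G.E 0 1 h k (s + 1)) := by
    rw [sub_mul, cf_sub, cf_YY_mul, cf_XX_mul, cfW, cfW]
  have rhs_eq : cf (r + 1) (s + 1) (sgn (p h * p j) •
      (if h = j then XX * (YY *
        (∑ q ∈ Finset.range (μ 0), inX (G.D 0 i q) * inY (G.E 0 1 q k) -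
         ∑ q ∈ Finset.range (μ 0), inX (G.D 0 i q) * inX (G.E 0 1 q k))) else 0)) =
      sgn (p h * p j) •
        (if h = j then
          (∑ q ∈ Finset.range (μ 0), G.D 0 i q r * G.E 0 1 q k s) -
            (if s = 0 then
              ∑ q ∈ Finset.range (μ 0), ∑ e ∈ Finset.range (r + 1),
                G.D 0 i q e * G.E 0 1 q k (r - e)
             else 0)
         else 0) := by
    rw [cf_smul, apply_ite (cf (r + 1) (s + 1)), cf_zero, cf_XX_mul, cf_YY_mul, cf_sub,
      cf_sum, cf_sum]
    simp only [cf_inX_mul_inY, cf_inX_mul_inX, Finset.sum_ite_irrel, Finset.sum_const_zero]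
  rw [← lhs_eq, hfin, rhs_eq]


end SuperYangian
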